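/- For every finite graph G, the symmetric lettericity of G equals its neighborhood diversity: sl(G) = nd(G). -/

import Mathlib

/-- The letter graph `G(D, w)` on vertex set `Fin w.length`: positions `i < j`
are adjacent iff the ordered pair of letters `(w_i, w_j)` lies in the decoder `D`. -/
def letterGraph {A : Type*} (D : Set (A × A)) (w : List A) : SimpleGraph (Fin w.length) where
  Adj i j := (i < j ∧ (w.get i, w.get j) ∈ D) ∨ (j < i ∧ (w.get j, w.get i) ∈ D)
  symm := by constructor; intro i j h; exact h.symm
  loopless := by constructor; intro i h; rcases h with ⟨h, -⟩ | ⟨h, -⟩ <;> exact lt_irrefl _ h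

/-- The lettericity of a finite graph `G`: the smallest `k` such that `G` is
isomorphic to a letter graph over an alphabet of size `k`. -/
noncomputable def lettericity {V : Type*} [Fintype V] (G : SimpleGraph V) : ℕ :=
  sInf {k : ℕ | ∃ (D : Set (Fin k × Fin k)) (w : List (Fin k)),
    w.length = Fintype.card V ∧ Nonempty (G ≃g letterGraph D w)}

/-- The symmetric lettericity of a finite graph `G`: the smallest `k` such that
`G` is isomorphic to a letter graph over an alphabet of size `k` with a symmetric
decoder. -/
noncomputable def symLettericity {V : Type*} [Fintype V] (G : SimpleGraph V) : ℕ :=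
  sInf {k : ℕ | ∃ (D : Set (Fin k × Fin k)) (w : List (Fin k)),
    (∀ x y : Fin k, (x, y) ∈ D ↔ (y, x) ∈ D) ∧
    w.length = Fintype.card V ∧ Nonempty (G ≃g letterGraph D w)}

/-- The neighborhood diversity of a finite graph `G`: the smallest number of parts
of a partition of the vertex set such that any two distinct vertices in the same
part are generalized twins (`N(u) \ {v} = N(v) \ {u}`). -/
noncomputable def neighborhoodDiversity {V : Type*} [Fintype V] [DecidableEq V]
    (G : SimpleGraph V) : ℕ :=
  sInf {p : ℕ | ∃ P : Finpartition (Finset.univ : Finset V), P.parts.card = p ∧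
    ∀ s ∈ P.parts, ∀ u ∈ s, ∀ v ∈ s, u ≠ v →
      G.neighborSet u \ {v} = G.neighborSet v \ {u}}

open Finset

lemma letterGraph_adj_symm {A : Type*} {D : Set (A × A)}
    (hD : ∀ x y : A, (x, y) ∈ D ↔ (y, x) ∈ D) (w : List A) (i j : Fin w.length) :
    (letterGraph D w).Adj i j ↔ i ≠ j ∧ (w.get i, w.get j) ∈ D := by
  constructor
  · rintro (⟨h, hm⟩ | ⟨h, hm⟩)
    · exact ⟨h.ne, hm⟩
    · exact ⟨h.ne', (hD _ _).mpr hm⟩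
  · rintro ⟨hne, hm⟩
    rcases lt_or_gt_of_ne hne with h | h
    · exact Or.inl ⟨h, hm⟩
    · exact Or.inr ⟨h, (hD _ _).mp hm⟩

section twins
variable {V : Type*} {G : SimpleGraph V}

lemma gt_adj {u v x : V} (h : G.neighborSet u \ {v} = G.neighborSet v \ {u})
    (hxu : x ≠ u) (hxv : x ≠ v) : G.Adj u x ↔ G.Adj v x := by
  have h' := Set.ext_iff.mp h x
  simp only [Set.mem_diff, SimpleGraph.mem_neighborSet, Set.mem_singleton_iff] at h'
  exact ⟨fun ha => (h'.mp ⟨ha, hxv⟩).1, fun ha => (h'.mpr ⟨ha, hxu⟩).1⟩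

-- within one twin-class, adjacency is constant on distinct pairs
lemma within_step {s : Set V}
    (H : ∀ u ∈ s, ∀ v ∈ s, u ≠ v → G.neighborSet u \ {v} = G.neighborSet v \ {u})
    {a b c : V} (ha : a ∈ s) (hb : b ∈ s) (hc : c ∈ s)
    (hab : G.Adj a b) (hca : c ≠ a) : G.Adj a c := by
  by_cases hcb : c = b
  · exact hcb ▸ hab
  · have hgt := H b hb c hc (fun h => hcb h.symm)
    exact ((gt_adj hgt hab.ne hca.symm).mp hab.symm).symm

lemma within_const {s : Set V}
    (H : ∀ u ∈ s, ∀ v ∈ s, u ≠ v → G.neighborSet u \ {v} = G.neighborSet v \ {u})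
    {u v x y : V} (hu : u ∈ s) (hv : v ∈ s) (hx : x ∈ s) (hy : y ∈ s)
    (huv : G.Adj u v) (hxy : x ≠ y) : G.Adj x y := by
  by_cases hyu : y = u
  · subst hyu
    exact (within_step H hu hv hx huv hxy).symm
  · have h1 : G.Adj u y := within_step H hu hv hy huv hyu
    exact (within_step H hy hu hx h1.symm hxy).symm

end twins

section constancy
variable {V : Type*} [Fintype V] [DecidableEq V] {G : SimpleGraph V}

lemma part_constancy (P : Finpartition (Finset.univ : Finset V))
    (hP : ∀ s ∈ P.parts, ∀ u ∈ s, ∀ v ∈ s, u ≠ v →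
      G.neighborSet u \ {v} = G.neighborSet v \ {u})
    {s t : Finset V} (hs : s ∈ P.parts) (ht : t ∈ P.parts)
    {u u' v v' : V} (hu : u ∈ s) (hu' : u' ∈ s) (hv : v ∈ t) (hv' : v' ∈ t)
    (huv : u ≠ v) (h : G.Adj u' v') : G.Adj u v := by
  by_cases hst : s = t
  · subst hst
    exact within_const (s := (↑s : Set V)) (hP s hs) hu' hv' hu hv h huv
  · have hv's : v' ∉ s := fun hmem => hst (P.eq_of_mem_parts hs ht hmem hv')
    have hut : u ∉ t := fun hmem => hst (P.eq_of_mem_parts hs ht hu hmem)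
    have h1 : G.Adj u v' := by
      by_cases huu : u = u'
      · exact huu ▸ h
      · have hgt := hP s hs u hu u' hu' huu
        exact (gt_adj hgt (fun he => hv's (by rw [he]; exact hu)) (fun he => hv's (by rw [he]; exact hu'))).mpr h
    by_cases hvv : v = v'
    · exact hvv ▸ h1
    · have hgt := hP t ht v hv v' hv' hvv
      exact ((gt_adj hgt huv (fun he => hut (by rw [he]; exact hv'))).mpr h1.symm).symm

end constancy

section fiber
variable {V : Type*} [Fintype V] [DecidableEq V]

/-- the partition of `univ` into fibers of `ℓ`. -/
def fiberPartition {B : Type*} [DecidableEq B] (ℓ : V → B) :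
    Finpartition (Finset.univ : Finset V) where
  parts := (univ.image ℓ).image (fun a => univ.filter (fun v => ℓ v = a))
  supIndep := by
    rw [Finset.supIndep_iff_pairwiseDisjoint]
    rintro p hp q hq hpq
    simp only [coe_image, Set.mem_image, mem_coe] at hp hq
    obtain ⟨a, -, rfl⟩ := hp
    obtain ⟨b, -, rfl⟩ := hq
    have hab : a ≠ b := fun h => hpq (by rw [h])
    simp only [id, Finset.disjoint_left, mem_filter]
    rintro x ⟨-, hx1⟩ ⟨-, hx2⟩
    exact hab (hx1 ▸ hx2 ▸ rfl)
  sup_parts := by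
    apply le_antisymm (Finset.sup_le fun p _ => le_top)
    intro v _
    rw [Finset.mem_sup]
    exact ⟨univ.filter (fun x => ℓ x = ℓ v), mem_image_of_mem _ (mem_image_of_mem _ (mem_univ v)),
      by simp⟩
  bot_notMem := by
    intro hbot
    obtain ⟨a, ha, heq⟩ := mem_image.mp hbot
    obtain ⟨v, -, rfl⟩ := mem_image.mp ha
    have hv : v ∈ univ.filter (fun x => ℓ x = ℓ v) := by simp
    rw [heq] at hv
    simp at hv

lemma fiberPartition_card_le {B : Type*} [DecidableEq B] [Fintype B] (ℓ : V → B) :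
    (fiberPartition ℓ).parts.card ≤ Fintype.card B :=
  le_trans (Finset.card_image_le) (Finset.card_le_univ _)

lemma mem_fiberPartition_parts {B : Type*} [DecidableEq B] (ℓ : V → B) {p : Finset V}
    (hp : p ∈ (fiberPartition ℓ).parts) : ∃ a, p = univ.filter (fun v => ℓ v = a) := by
  obtain ⟨a, -, rfl⟩ := mem_image.mp hp
  exact ⟨a, rfl⟩

end fiber

section main
variable {V : Type*} [Fintype V] [DecidableEq V] (G : SimpleGraph V)

lemma mem_sl_of_partition {p : ℕ} (P : Finpartition (Finset.univ : Finset V))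
    (hcard : P.parts.card = p)
    (hP : ∀ s ∈ P.parts, ∀ u ∈ s, ∀ v ∈ s, u ≠ v →
      G.neighborSet u \ {v} = G.neighborSet v \ {u}) :
    ∃ (D : Set (Fin p × Fin p)) (w : List (Fin p)),
      (∀ x y : Fin p, (x, y) ∈ D ↔ (y, x) ∈ D) ∧
      w.length = Fintype.card V ∧ Nonempty (G ≃g letterGraph D w) := by
  classical
  choose pt hpt1 hpt2 using fun v : V => P.exists_mem (mem_univ v)
  have hpcard : Fintype.card ↥P.parts = p := by rw [Fintype.card_coe]; exact hcard
  let epi : ↥P.parts ≃ Fin p := Fintype.equivFinOfCardEq hpcard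
  let ℓ : V → Fin p := fun v => epi ⟨pt v, hpt1 v⟩
  have hℓ : ∀ u v : V, ℓ u = ℓ v → pt u = pt v := by
    intro u v h
    exact Subtype.ext_iff.mp (epi.injective h)
  set D : Set (Fin p × Fin p) := {ab | ∃ u v : V, G.Adj u v ∧ ℓ u = ab.1 ∧ ℓ v = ab.2}
    with hDdef
  have hD : ∀ x y : Fin p, (x, y) ∈ D ↔ (y, x) ∈ D := by
    intro x y
    constructor <;> (rintro ⟨u, v, h, h1, h2⟩; exact ⟨v, u, h.symm, h2, h1⟩)
  let e : V ≃ Fin (Fintype.card V) := Fintype.equivFin V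
  let w : List (Fin p) := List.ofFn (fun i => ℓ (e.symm i))
  have hlen : w.length = Fintype.card V := List.length_ofFn
  refine ⟨D, w, hD, hlen, ⟨?_⟩⟩
  let φ : V ≃ Fin w.length := e.trans (finCongr hlen.symm)
  have hget : ∀ a : V, w.get (φ a) = ℓ a := fun a =>
    (List.get_ofFn (fun i => ℓ (e.symm i)) (φ a)).trans (congrArg ℓ (e.symm_apply_apply a))
  refine { toEquiv := φ, map_rel_iff' := ?_ }
  intro a b
  rw [letterGraph_adj_symm hD, hget, hget]
  constructor
  · rintro ⟨hne, hmem⟩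
    have hab : a ≠ b := fun h => hne (by rw [h])
    obtain ⟨u, v, huv, h1, h2⟩ := hmem
    exact part_constancy P hP (hpt1 a) (hpt1 b) (hpt2 a) ((hℓ u a h1) ▸ hpt2 u)
      (hpt2 b) ((hℓ v b h2) ▸ hpt2 v) hab huv
  · intro h
    exact ⟨fun he => h.ne (φ.injective he), a, b, h, rfl, rfl⟩

lemma exists_partition_of_letter {k : ℕ} (D : Set (Fin k × Fin k)) (w : List (Fin k))
    (hD : ∀ x y : Fin k, (x, y) ∈ D ↔ (y, x) ∈ D)
    (hlen : w.length = Fintype.card V) (e : G ≃g letterGraph D w) :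
    ∃ p ≤ k, ∃ P : Finpartition (Finset.univ : Finset V), P.parts.card = p ∧
      ∀ s ∈ P.parts, ∀ u ∈ s, ∀ v ∈ s, u ≠ v →
        G.neighborSet u \ {v} = G.neighborSet v \ {u} := by
  classical
  let ℓ : V → Fin k := fun v => w.get (e v)
  refine ⟨(fiberPartition ℓ).parts.card, by simpa using fiberPartition_card_le ℓ,
    fiberPartition ℓ, rfl, ?_⟩
  intro s hs u hu v hv huv
  obtain ⟨a, rfl⟩ := mem_fiberPartition_parts ℓ hs
  simp only [mem_filter] at hu hv
  have hℓuv : ℓ u = ℓ v := hu.2.trans hv.2.symm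
  have key : ∀ x : V, x ≠ u → x ≠ v → (G.Adj u x ↔ G.Adj v x) := by
    intro x hxu hxv
    have hne1 : e u ≠ e x := fun h => hxu (e.toEquiv.injective h).symm
    have hne2 : e v ≠ e x := fun h => hxv (e.toEquiv.injective h).symm
    have h1 : G.Adj u x ↔ (ℓ u, ℓ x) ∈ D := by
      rw [← e.map_rel_iff, letterGraph_adj_symm hD]
      exact and_iff_right hne1
    have h2 : G.Adj v x ↔ (ℓ v, ℓ x) ∈ D := by
      rw [← e.map_rel_iff, letterGraph_adj_symm hD]
      exact and_iff_right hne2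
    rw [h1, h2, hℓuv]
  ext x
  simp only [Set.mem_diff, SimpleGraph.mem_neighborSet, Set.mem_singleton_iff]
  constructor
  · rintro ⟨hadj, hxv⟩
    have hxu : x ≠ u := fun h => G.irrefl (h ▸ hadj)
    exact ⟨(key x hxu hxv).mp hadj, hxu⟩
  · rintro ⟨hadj, hxu⟩
    have hxv : x ≠ v := fun h => G.irrefl (h ▸ hadj)
    exact ⟨(key x hxu hxv).mpr hadj, hxv⟩

end main

/-- The symmetric lettericity of a finite graph equals its neighborhood diversity. -/
theorem symLettericity_eq_neighborhoodDiversity {V : Type*} [Fintype V] [DecidableEq V]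
    (G : SimpleGraph V) :
    symLettericity G = neighborhoodDiversity G := by
  classical
  rw [symLettericity, neighborhoodDiversity]
  have hT : ∃ P : Finpartition (Finset.univ : Finset V),
      ∀ s ∈ P.parts, ∀ u ∈ s, ∀ v ∈ s, u ≠ v →
        G.neighborSet u \ {v} = G.neighborSet v \ {u} := by
    refine ⟨fiberPartition (id : V → V), ?_⟩
    intro s hs u hu v hv huv
    obtain ⟨a, rfl⟩ := mem_fiberPartition_parts _ hs
    simp only [mem_filter, id] at hu hv
    exact absurd (hu.2.trans hv.2.symm) huv
  obtain ⟨P₀, hP₀⟩ := hT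
  have hTne : {p : ℕ | ∃ P : Finpartition (Finset.univ : Finset V), P.parts.card = p ∧
      ∀ s ∈ P.parts, ∀ u ∈ s, ∀ v ∈ s, u ≠ v →
        G.neighborSet u \ {v} = G.neighborSet v \ {u}}.Nonempty :=
    ⟨P₀.parts.card, P₀, rfl, hP₀⟩
  apply le_antisymm
  · obtain ⟨P, hcard, hP⟩ := Nat.sInf_mem hTne
    obtain ⟨D, w, hD, hlen, hiso⟩ := mem_sl_of_partition G P hcard hP
    exact Nat.sInf_le ⟨D, w, hD, hlen, hiso⟩
  · have hSne : {k : ℕ | ∃ (D : Set (Fin k × Fin k)) (w : List (Fin k)),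
        (∀ x y : Fin k, (x, y) ∈ D ↔ (y, x) ∈ D) ∧
        w.length = Fintype.card V ∧ Nonempty (G ≃g letterGraph D w)}.Nonempty := by
      obtain ⟨D, w, hD, hlen, hiso⟩ := mem_sl_of_partition G P₀ rfl hP₀
      exact ⟨_, D, w, hD, hlen, hiso⟩
    obtain ⟨D, w, hD, hlen, ⟨e⟩⟩ := Nat.sInf_mem hSne
    obtain ⟨p, hpk, Q, hcard, hQ⟩ := exists_partition_of_letter G D w hD hlen e
    exact le_trans (Nat.sInf_le ⟨Q, hcard, hQ⟩) hpk
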